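/- arXiv:2511.04298 — 3 statements merged into one kernel-verified Lean document; each statement's English description precedes it below -/
import Mathlib

section
/- Fix a state e₀ ∈ E and define the column vectors D_t indexed by E by D_T(u) = 𝟙(u = e₀) and D_{t−1} = H_t D_t for 2 ≤ t ≤ T. Then for every t with 1 ≤ t ≤ T and every (z₁,…,z_t) ∈ E^t, the marginal of π on {1,…,t} satisfies π₁ᵗ(z₁,…,z_t) = C^{−1} Γ_t(z₁,…,z_t) D_t, where Γ_t(z₁,…,z_t) D_t = Σ_{u ∈ E} Γ_t(z₁,…,z_t)(u) D_t(u). -/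
/-- With `D_T(u) = 𝟙(u = e₀)` and `D_{t-1} = H_t D_t`, the marginal of the
Gibbs distribution `π` on the first `t` sites satisfies
`π₁ᵗ(z₁,…,z_t) = C⁻¹ Γ_t(z₁,…,z_t) D_t = C⁻¹ ∑_u Γ_t(z₁,…,z_t)(u) D_t(u)` for `1 ≤ t ≤ T`,
where `Γ_t(z₁,…,z_t)(u) = exp(U_t(z₁,…,z_t) + Ψ_t(z_t,u))`,
`U_t = ∑_{s=1}^{t} θ_s(z_s) + ∑_{s=1}^{t-1} Ψ_s(z_s,z_{s+1})`,
`H_t(u,v) = exp(θ_t(u) + Ψ_t(u,v))`, and `Ψ_T ≡ 0`.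
(Sites and potentials are indexed from `0` here.) -/
theorem marginal_eq_gamma_dot_D
    {E : Type*} [Fintype E] [DecidableEq E] [Nonempty E]
    (T : ℕ) (hT : 2 ≤ T)
    (θ : ℕ → E → ℝ) (Ψ : ℕ → E → E → ℝ)
    (hΨT : ∀ u v, Ψ (T - 1) u v = 0)
    (U : (t : ℕ) → (Fin t → E) → ℝ)
    (hU : ∀ (t : ℕ) (z : Fin t → E),
      U t z = (∑ s : Fin t, θ s.1 (z s))
        + ∑ s : Fin (t - 1),
            Ψ s.1 (z ⟨s.1, by have := s.2; omega⟩) (z ⟨s.1 + 1, by have := s.2; omega⟩))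
    (C : ℝ) (hC : C = ∑ z : Fin T → E, Real.exp (U T z))
    (π : (Fin T → E) → ℝ) (hπ : ∀ z, π z = C⁻¹ * Real.exp (U T z))
    (Γ : (t : ℕ) → (Fin t → E) → E → ℝ)
    (hΓ : ∀ (t : ℕ) (ht : 1 ≤ t) (z : Fin t → E) (u : E),
      Γ t z u = Real.exp (U t z + Ψ (t - 1) (z ⟨t - 1, by omega⟩) u))
    (H : ℕ → Matrix E E ℝ)
    (hH : ∀ t u v, H t u v = Real.exp (θ t u + Ψ t u v))
    (e₀ : E) (D : ℕ → E → ℝ)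
    (hDT : ∀ u, D T u = if u = e₀ then 1 else 0)
    (hDrec : ∀ (t : ℕ), 2 ≤ t → t ≤ T → ∀ u, D (t - 1) u = ∑ v, H (t - 1) u v * D t v) :
    ∀ (t : ℕ) (ht1 : 1 ≤ t) (ht2 : t ≤ T) (w : Fin t → E),
      (∑ y : Fin T → E,
        if ∀ j : Fin t, y ⟨j.1, by have := j.2; omega⟩ = w j then π y else 0)
      = C⁻¹ * ∑ u : E, Γ t w u * D t u := by
  have key : ∀ (d t : ℕ) (htd : t + d = T) (h1 : 1 ≤ t) (w : Fin t → E),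
      (∑ y : Fin T → E,
        if ∀ j : Fin t, y ⟨j.1, by have := j.2; omega⟩ = w j then Real.exp (U T y) else 0)
      = ∑ u : E, Γ t w u * D t u := by
    intro d
    induction d with
    | zero =>
      intro t htd h1 w
      have htT : t = T := by omega
      subst htT
      have hL : (∑ y : Fin t → E,
          if ∀ j : Fin t, y ⟨j.1, by have := j.2; omega⟩ = w j then Real.exp (U t y) else 0)
          = Real.exp (U t w) := by
        rw [Finset.sum_eq_single w]
        · simp
        · intro y _ hy
          rw [if_neg]
          intro hc
          exact hy (funext fun j => by simpa using hc j)
        · simp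
      rw [hL]
      have hR : ∀ u : E, Γ t w u * D t u
          = (if u = e₀ then Real.exp (U t w) else 0) := by
        intro u
        rw [hΓ t h1 w u, hDT u]
        split
        · simp [hΨT]
        · simp
      simp only [hR]
      simp
    | succ d ih =>
      intro t htd h1 w
      obtain ⟨m, rfl⟩ : ∃ m, t = m + 1 := ⟨t - 1, by omega⟩
      set w' : E → Fin (m + 2) → E :=
        fun v j => if h : j.1 < m + 1 then w ⟨j.1, h⟩ else v with hw'
      have hw1 : ∀ (v : E) (j : Fin (m + 2)) (h : j.1 < m + 1), w' v j = w ⟨j.1, h⟩ := by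
        intro v j h; rw [hw']; exact dif_pos h
      have hw2 : ∀ (v : E) (j : Fin (m + 2)) (h : j.1 = m + 1), w' v j = v := by
        intro v j h; simp [hw', h]
      -- step 1 : split the sum according to the value of coordinate m+1
      have step1 : (∑ y : Fin T → E,
          if ∀ j : Fin (m + 1), y ⟨j.1, by have := j.2; omega⟩ = w j
            then Real.exp (U T y) else 0)
          = ∑ v : E, ∑ y : Fin T → E,
              if ∀ j : Fin (m + 2), y ⟨j.1, by have := j.2; omega⟩ = w' v j
                then Real.exp (U T y) else 0 := by
        rw [Finset.sum_comm]
        apply Finset.sum_congr rfl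
        intro y _
        rw [Finset.sum_eq_single (y ⟨m + 1, by omega⟩)]
        · congr 1
          apply propext
          constructor
          · intro hc j
            by_cases h : j.1 < m + 1
            · rw [hw1 _ j h]
              exact hc ⟨j.1, h⟩
            · have hj : j.1 = m + 1 := by have := j.2; omega
              rw [hw2 _ j hj]
              congr 1
              exact Fin.ext hj
          · intro hc j
            have := hc ⟨j.1, by have := j.2; omega⟩
            rwa [hw1 _ _ j.2] at this
        · intro v _ hv
          rw [if_neg]
          intro hc
          apply hv
          have := hc ⟨m + 1, by omega⟩
          rw [hw2 _ _ rfl] at this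
          exact this.symm
        · simp
      rw [step1]
      have step2 : ∀ v : E, (∑ y : Fin T → E,
          if ∀ j : Fin (m + 2), y ⟨j.1, by have := j.2; omega⟩ = w' v j
            then Real.exp (U T y) else 0)
          = ∑ u : E, Γ (m + 2) (w' v) u * D (m + 2) u := by
        intro v
        exact ih (m + 2) (by omega) (by omega) (w' v)
      simp only [step2]
      -- step 3: compute U (m+2) (w' v)
      have hUsplit : ∀ v : E,
          U (m + 2) (w' v) = U (m + 1) w + (θ (m + 1) v + Ψ m (w ⟨m, by omega⟩) v) := by
        intro v
        rw [hU (m + 2) (w' v), hU (m + 1) w]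
        have e1 : (∑ s : Fin (m + 2), θ s.1 (w' v s))
            = (∑ s : Fin (m + 1), θ s.1 (w s)) + θ (m + 1) v := by
          rw [Fin.sum_univ_castSucc]
          congr 1
          · apply Finset.sum_congr rfl
            intro s _
            rw [hw1 v _ (by simp; omega)]
            simp
          · rw [hw2 v _ (by simp)]
            simp
        have e2 : (∑ s : Fin (m + 2 - 1),
              Ψ s.1 ((w' v) ⟨s.1, by have := s.2; omega⟩) ((w' v) ⟨s.1 + 1, by have := s.2; omega⟩))
            = (∑ s : Fin (m + 1 - 1),
                Ψ s.1 (w ⟨s.1, by have := s.2; omega⟩) (w ⟨s.1 + 1, by have := s.2; omega⟩))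
              + Ψ m (w ⟨m, by omega⟩) v := by
          have h21 : (∑ s : Fin (m + 2 - 1),
              Ψ s.1 ((w' v) ⟨s.1, by have := s.2; omega⟩) ((w' v) ⟨s.1 + 1, by have := s.2; omega⟩))
              = ∑ s : Fin (m + 1),
              Ψ s.1 ((w' v) ⟨s.1, by have := s.2; omega⟩) ((w' v) ⟨s.1 + 1, by have := s.2; omega⟩) := rfl
          rw [h21, Fin.sum_univ_castSucc]
          congr 1
          · apply Finset.sum_congr rfl
            intro s _
            rw [hw1 v _ (by simpa using by omega), hw1 v _ (by simpa using by omega)]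
            simp
          · rw [hw1 v _ (by simp), hw2 v _ (by simp)]
            simp
        rw [e1, e2]
        ring
      -- step 4: Γ (m+2) (w' v) u = Γ (m+1) w v * H (m+1) v u
      have step4 : ∀ (v u : E),
          Γ (m + 2) (w' v) u * D (m + 2) u
          = Γ (m + 1) w v * (H (m + 1) v u * D (m + 2) u) := by
        intro v u
        rw [hΓ (m + 2) (by omega) (w' v) u, hΓ (m + 1) (by omega) w v, hH]
        rw [hw2 v _ (by simp)]
        rw [hUsplit v]
        rw [← mul_assoc, ← Real.exp_add]
        congr 2
        have r1 : m + 2 - 1 = m + 1 := rfl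
        have r2 : m + 1 - 1 = m := rfl
        simp only [r1, r2]
        ring
      simp only [step4]
      apply Finset.sum_congr rfl
      intro v _
      rw [← Finset.mul_sum]
      congr 1
      exact (hDrec (m + 2) (by omega) (by omega) v).symm
  intro t ht1 ht2 w
  have hkey := key (T - t) t (by omega) ht1 w
  calc (∑ y : Fin T → E,
        if ∀ j : Fin t, y ⟨j.1, by have := j.2; omega⟩ = w j then π y else 0)
      = ∑ y : Fin T → E,
        C⁻¹ * (if ∀ j : Fin t, y ⟨j.1, by have := j.2; omega⟩ = w j
          then Real.exp (U T y) else 0) := by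
        apply Finset.sum_congr rfl
        intro y _
        rw [hπ y]
        split <;> simp
    _ = C⁻¹ * ∑ y : Fin T → E,
        (if ∀ j : Fin t, y ⟨j.1, by have := j.2; omega⟩ = w j
          then Real.exp (U T y) else 0) := by rw [Finset.mul_sum]
    _ = C⁻¹ * ∑ u : E, Γ t w u * D t u := by rw [hkey]
end

section
/- For the binary auto-logistic temporal model, the normalizing constant admits the closed form C = [ (λ₁^{T−1}(λ₂ − 1) + λ₂^{T−1}(1 − λ₁))(1 + e^α) + e^α (1 + e^{α+β})(λ₂^{T−1} − λ₁^{T−1}) ] / √Δ, where Δ = (1 − e^{α+β})² + 4 e^α, λ₁ = (1 + e^{α+β} − √Δ)/2 and λ₂ = (1 + e^{α+β} + √Δ)/2. -/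
noncomputable def AutoLogAB (α β : ℝ) : ℕ → ℝ × ℝ
  | 0 => (1, Real.exp α)
  | n + 1 => ((AutoLogAB α β n).1 + (AutoLogAB α β n).2,
      Real.exp α * (AutoLogAB α β n).1 + Real.exp (α + β) * (AutoLogAB α β n).2)

noncomputable def AutoLogEn (α β : ℝ) (n : ℕ) (z : Fin (n + 1) → Fin 2) : ℝ :=
  (∑ t, α * ((z t : ℕ) : ℝ))
    + ∑ t : Fin n, β * ((z t.castSucc : ℕ) : ℝ) * ((z t.succ : ℕ) : ℝ)

lemma AutoLogEn_cons (α β : ℝ) (n : ℕ) (x : Fin 2) (z : Fin (n + 1) → Fin 2) :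
    AutoLogEn α β (n + 1) (Fin.cons x z)
      = α * (x : ℕ) + β * (x : ℕ) * ((z 0 : ℕ) : ℝ) + AutoLogEn α β n z := by
  unfold AutoLogEn
  rw [Fin.sum_univ_succ (f := fun t => α * (((Fin.cons x z : Fin (n+2) → Fin 2) t : ℕ) : ℝ)),
      Fin.sum_univ_succ (f := fun t : Fin (n+1) => β * (((Fin.cons x z : Fin (n+2) → Fin 2) t.castSucc : ℕ) : ℝ)
        * (((Fin.cons x z : Fin (n+2) → Fin 2) t.succ : ℕ) : ℝ))]
  simp [Fin.cons_succ, ← Fin.succ_castSucc]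
  ring

lemma AutoLogSum (α β : ℝ) : ∀ (n : ℕ) (g : Fin 2 → ℝ),
    ∑ z : Fin (n + 1) → Fin 2, g (z 0) * Real.exp (AutoLogEn α β n z)
      = g 0 * (AutoLogAB α β n).1 + g 1 * (AutoLogAB α β n).2 := by
  intro n
  induction n with
  | zero =>
    intro g
    rw [← (Equiv.funUnique (Fin 1) (Fin 2)).symm.sum_comp]
    simp [AutoLogEn, AutoLogAB, Fin.sum_univ_two, Equiv.funUnique]
  | succ n ih =>
    intro g
    have hx : ∀ x : Fin 2,
        ∑ z : Fin (n + 1) → Fin 2,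
            g ((Fin.cons x z : Fin (n+2) → Fin 2) 0) * Real.exp (AutoLogEn α β (n + 1) (Fin.cons x z : Fin (n+2) → Fin 2))
          = (fun y : Fin 2 => g x * Real.exp (α * ((x : ℕ) : ℝ) + β * ((x : ℕ) : ℝ) * ((y : ℕ) : ℝ))) 0
              * (AutoLogAB α β n).1
            + (fun y : Fin 2 => g x * Real.exp (α * ((x : ℕ) : ℝ) + β * ((x : ℕ) : ℝ) * ((y : ℕ) : ℝ))) 1
              * (AutoLogAB α β n).2 := by
      intro x
      rw [← ih (fun y : Fin 2 => g x * Real.exp (α * ((x : ℕ) : ℝ) + β * ((x : ℕ) : ℝ) * ((y : ℕ) : ℝ)))]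
      apply Finset.sum_congr rfl
      intro z _
      simp only [Fin.cons_zero, AutoLogEn_cons, Real.exp_add]
      ring
    rw [← ((Fin.consEquiv (fun _ : Fin (n+2) => Fin 2))).sum_comp]
    rw [Fintype.sum_prod_type]
    have e : ∀ (x : Fin 2) (z : Fin (n+1) → Fin 2),
        ((Fin.consEquiv fun _ : Fin (n+2) => Fin 2) (x, z)) = (Fin.cons x z : Fin (n+2) → Fin 2) :=
      fun _ _ => rfl
    simp only [e]
    rw [Fin.sum_univ_two, hx 0, hx 1]
    simp [AutoLogAB, Real.exp_add]
    ring

/-- For the binary auto-logistic temporal model on `{0,1}^T` with energy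
`U(z) = ∑_{t=1}^{T} α z_t + ∑_{t=1}^{T-1} β z_t z_{t+1}`, the normalizing constant has the
closed form
`C = [(λ₁^{T-1}(λ₂-1) + λ₂^{T-1}(1-λ₁))(1+e^α) + e^α(1+e^{α+β})(λ₂^{T-1}-λ₁^{T-1})]/√Δ`,
where `Δ = (1-e^{α+β})² + 4e^α`, `λ₁ = (1+e^{α+β}-√Δ)/2`, `λ₂ = (1+e^{α+β}+√Δ)/2`. -/
theorem binary_autologistic_normalizing_constant_closed_form
    (T : ℕ) (hT : 2 ≤ T) (α β : ℝ)
    (U : (Fin T → Fin 2) → ℝ)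
    (hU : ∀ z : Fin T → Fin 2,
      U z = (∑ t : Fin T, α * ((z t).1 : ℝ))
        + ∑ t : Fin (T - 1),
            β * ((z ⟨t.1, by have := t.2; omega⟩).1 : ℝ)
              * ((z ⟨t.1 + 1, by have := t.2; omega⟩).1 : ℝ))
    (C : ℝ) (hC : C = ∑ z : Fin T → Fin 2, Real.exp (U z))
    (Δ lam₁ lam₂ : ℝ)
    (hΔ : Δ = (1 - Real.exp (α + β)) ^ 2 + 4 * Real.exp α)
    (hlam₁ : lam₁ = (1 + Real.exp (α + β) - Real.sqrt Δ) / 2)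
    (hlam₂ : lam₂ = (1 + Real.exp (α + β) + Real.sqrt Δ) / 2) :
    C = ((lam₁ ^ (T - 1) * (lam₂ - 1) + lam₂ ^ (T - 1) * (1 - lam₁)) * (1 + Real.exp α)
          + Real.exp α * (1 + Real.exp (α + β)) * (lam₂ ^ (T - 1) - lam₁ ^ (T - 1)))
        / Real.sqrt Δ := by
  obtain ⟨n, rfl⟩ : ∃ n, T = n + 1 := ⟨T - 1, by omega⟩
  -- the sum equals the recursive partition function
  have hUE : ∀ z : Fin (n + 1) → Fin 2, U z = AutoLogEn α β n z := by
    intro z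
    rw [hU z]
    rfl
  have hCab : C = (AutoLogAB α β n).1 + (AutoLogAB α β n).2 := by
    rw [hC]
    have := AutoLogSum α β n (fun _ => 1)
    simp only [one_mul] at this
    calc ∑ z : Fin (n+1) → Fin 2, Real.exp (U z)
        = ∑ z : Fin (n+1) → Fin 2, (fun _ : Fin 2 => (1:ℝ)) (z 0) * Real.exp (AutoLogEn α β n z) := by
          apply Finset.sum_congr rfl; intro z _; rw [hUE z]; ring
      _ = (AutoLogAB α β n).1 + (AutoLogAB α β n).2 := by rw [AutoLogSum α β n (fun _ => 1)]; ring
  -- analytic facts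
  set s := Real.sqrt Δ with hs
  have hΔpos : 0 < Δ := by
    rw [hΔ]; positivity
  have hspos : 0 < s := Real.sqrt_pos.mpr hΔpos
  have hs2 : s ^ 2 = (1 - Real.exp (α + β)) ^ 2 + 4 * Real.exp α := by
    rw [hs, Real.sq_sqrt hΔpos.le, hΔ]
  have hsum : lam₁ + lam₂ = 1 + Real.exp (α + β) := by rw [hlam₁, hlam₂]; ring
  have hdiff : lam₂ - lam₁ = s := by rw [hlam₁, hlam₂]; ring
  have hprod : lam₁ * lam₂ = Real.exp (α + β) - Real.exp α := by
    rw [hlam₁, hlam₂]; linear_combination (-1/4 : ℝ) * hs2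
  have hq1 : lam₁ ^ 2 = (1 + Real.exp (α + β)) * lam₁ - (Real.exp (α + β) - Real.exp α) := by
    rw [hlam₁]; linear_combination (1/4 : ℝ) * hs2
  have hq2 : lam₂ ^ 2 = (1 + Real.exp (α + β)) * lam₂ - (Real.exp (α + β) - Real.exp α) := by
    rw [hlam₂]; linear_combination (1/4 : ℝ) * hs2
  set c₁ : ℝ := lam₂ - 1 - Real.exp α with hc₁
  set c₂ : ℝ := 1 + Real.exp α - lam₁ with hc₂
  have key : ∀ m, s * (AutoLogAB α β m).1 = c₁ * lam₁ ^ m + c₂ * lam₂ ^ m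
      ∧ s * (AutoLogAB α β m).2
        = c₁ * (lam₁ - 1) * lam₁ ^ m + c₂ * (lam₂ - 1) * lam₂ ^ m := by
    intro m
    induction m with
    | zero =>
      constructor
      · simp only [AutoLogAB, pow_zero, mul_one]; linear_combination -hdiff
      · simp only [AutoLogAB, pow_zero, mul_one]; linear_combination -Real.exp α * hdiff
    | succ m ihm =>
      obtain ⟨ih1, ih2⟩ := ihm
      constructor
      · simp only [AutoLogAB]
        linear_combination ih1 + ih2
      · simp only [AutoLogAB]
        linear_combination Real.exp α * ih1 + Real.exp (α + β) * ih2
          - c₁ * lam₁ ^ m * hq1 - c₂ * lam₂ ^ m * hq2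
  obtain ⟨k1, k2⟩ := key n
  have hn1 : n + 1 - 1 = n := rfl
  rw [hn1, hCab, eq_div_iff hspos.ne']
  linear_combination k1 + k2 + (lam₂ ^ n - lam₁ ^ n) * ((1 + Real.exp α) * hsum - hprod)
end

section
/- Let p, q ∈ (0,1), let P be the 2×2 stochastic matrix on {−1,+1} with P(−1,−1) = p, P(+1,+1) = q, and set α = (1/2) ln(p/q), β = (1/4) ln( p q / ((1−p)(1−q)) ). Let P² be the two-step transition matrix with p₂ = P²(−1,−1), q₂ = P²(+1,+1), and set α' = (1/2) ln(p₂/q₂), β' = (1/4) ln( p₂ q₂ / ((1−p₂)(1−q₂)) ). Then α' = (1/2) ln[ (1 + e^{2α+4β}) / (1 + e^{−2α+4β}) ] and β' = (1/4) ln[ 1 + e^{4β−2α}(1 − e^{−4β})² / (1 + e^{−2α})² ]. -/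
/-- For `p, q ∈ (0,1)` and the transition matrix `P` on `{-1,+1}` (encoded by
`Bool` with `false ↦ -1`, `true ↦ +1`) with `P(-1,-1) = p`, `P(+1,+1) = q`, setting
`α = ½ ln(p/q)`, `β = ¼ ln(pq/((1-p)(1-q)))`, and letting `p₂ = P²(-1,-1)`,
`q₂ = P²(+1,+1)`, `α' = ½ ln(p₂/q₂)`, `β' = ¼ ln(p₂q₂/((1-p₂)(1-q₂)))`, one has
`α' = ½ ln[(1 + e^{2α+4β}) / (1 + e^{-2α+4β})]` and
`β' = ¼ ln[1 + e^{4β-2α}(1 - e^{-4β})² / (1 + e^{-2α})²]`. -/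
theorem ising_parameters_of_two_step_chain
    (p q : ℝ) (hp0 : 0 < p) (hp1 : p < 1) (hq0 : 0 < q) (hq1 : q < 1)
    (P : Matrix Bool Bool ℝ)
    (hPff : P false false = p) (hPft : P false true = 1 - p)
    (hPtf : P true false = 1 - q) (hPtt : P true true = q)
    (α β : ℝ)
    (hα : α = (1 / 2) * Real.log (p / q))
    (hβ : β = (1 / 4) * Real.log (p * q / ((1 - p) * (1 - q))))
    (p₂ q₂ : ℝ)
    (hp₂ : p₂ = (P ^ 2) false false) (hq₂ : q₂ = (P ^ 2) true true)
    (α' β' : ℝ)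
    (hα' : α' = (1 / 2) * Real.log (p₂ / q₂))
    (hβ' : β' = (1 / 4) * Real.log (p₂ * q₂ / ((1 - p₂) * (1 - q₂)))) :
    α' = (1 / 2) * Real.log ((1 + Real.exp (2 * α + 4 * β))
          / (1 + Real.exp (-(2 * α) + 4 * β)))
    ∧ β' = (1 / 4) * Real.log (1 + Real.exp (4 * β - 2 * α)
          * (1 - Real.exp (-(4 * β))) ^ 2 / (1 + Real.exp (-(2 * α))) ^ 2) := by
  have hp1' : 0 < 1 - p := by linarith
  have hq1' : 0 < 1 - q := by linarith
  have hD : 0 < (1 - p) * (1 - q) := mul_pos hp1' hq1'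
  have hpq : 0 < p * q := mul_pos hp0 hq0
  have e2a : Real.exp (2 * α) = p / q := by
    rw [hα, show 2 * ((1/2) * Real.log (p/q)) = Real.log (p/q) by ring,
      Real.exp_log (div_pos hp0 hq0)]
  have e4b : Real.exp (4 * β) = p * q / ((1 - p) * (1 - q)) := by
    rw [hβ, show 4 * ((1/4) * Real.log (p*q/((1-p)*(1-q)))) = Real.log (p*q/((1-p)*(1-q))) by ring,
      Real.exp_log (div_pos hpq hD)]
  have em2a : Real.exp (-(2 * α)) = q / p := by
    rw [Real.exp_neg, e2a, inv_div]
  have em4b : Real.exp (-(4 * β)) = (1 - p) * (1 - q) / (p * q) := by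
    rw [Real.exp_neg, e4b, inv_div]
  have hp₂' : p₂ = p * p + (1 - p) * (1 - q) := by
    rw [hp₂, pow_two, Matrix.mul_apply, Fintype.sum_bool, hPff, hPft, hPtf]
    ring
  have hq₂' : q₂ = q * q + (1 - p) * (1 - q) := by
    rw [hq₂, pow_two, Matrix.mul_apply, Fintype.sum_bool, hPft, hPtf, hPtt]
    ring
  constructor
  · rw [hα']
    congr 2
    rw [Real.exp_add, Real.exp_add, e2a, em2a, e4b, hp₂', hq₂']
    have h1 : q * q + (1 - p) * (1 - q) > 0 := by positivity
    field_simp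
    ring
  · rw [hβ']
    congr 2
    rw [show (4:ℝ) * β - 2 * α = 4 * β + -(2 * α) by ring, Real.exp_add, e4b, em2a, em4b,
      hp₂', hq₂']
    have h1 : 1 - (p * p + (1 - p) * (1 - q)) = (1 - p) * (p + q) := by ring
    have h2 : 1 - (q * q + (1 - p) * (1 - q)) = (1 - q) * (p + q) := by ring
    rw [h1, h2]
    have hs : 0 < p + q := by linarith
    field_simp
    ring
end
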